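/- arXiv:1610.03136 — 4 statements merged into one kernel-verified Lean document; each statement's English description precedes it below -/
import Mathlib

section
/- Let G and H be unital associative F-algebras with all triple commutators zero. For n > 1 and g_i ∈ G, h_i ∈ H, the left-normed commutator c_{2n} = [g_1 ⊗ h_1, g_2 ⊗ h_2, ..., g_{2n} ⊗ h_{2n}] in G ⊗ H equals [g_1,g_2][g_3,g_4]···[g_{2n-1},g_{2n}] ⊗ [h_1 h_2, h_3][h_4,h_5]···[h_{2n-2},h_{2n-1}] h_{2n} + [g_2 g_1, g_3][g_4,g_5]···[g_{2n-2},g_{2n-1}] g_{2n} ⊗ [h_1,h_2][h_3,h_4]···[h_{2n-1},h_{2n}]. -/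
open scoped TensorProduct

/-- Left-normed commutator: `lc a [b₁,...,bₙ] = [a, b₁, ..., bₙ]`. -/
def lc {A : Type*} [Ring A] : A → List A → A
  | a, [] => a
  | a, b :: l => lc ⁅a, b⁆ l

/-- Left-normed commutator of a list; `lcomm [a₁,...,aₙ] = [a₁,...,aₙ]`, `lcomm [] = 0`. -/
def lcomm {A : Type*} [Ring A] : List A → A
  | [] => 0
  | a :: l => lc a l

/-- `Tideal A n` = two-sided ideal of `A` generated by all left-normed commutators of length `n`. -/
def Tideal (A : Type*) [Ring A] (n : ℕ) : TwoSidedIdeal A :=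
  TwoSidedIdeal.span {x | ∃ l : List A, l.length = n ∧ x = lcomm l}

section helpers
variable {A : Type*} [Ring A]

lemma lc_append (b : A) (l : List A) : ∀ a : A, lc a (l ++ [b]) = ⁅lc a l, b⁆ := by
  induction l with
  | nil => intro a; rfl
  | cons c l ih => intro a; simpa [lc] using ih ⁅a, c⁆

lemma lcomm_append (a b : A) (l : List A) : lcomm ((a :: l) ++ [b]) = ⁅lcomm (a :: l), b⁆ :=
  lc_append b l a

lemma c_rec (x : ℕ → A) (m : ℕ) :
    lcomm (List.ofFn fun i : Fin (m+2) => x (↑i+1))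
      = ⁅lcomm (List.ofFn fun i : Fin (m+1) => x (↑i+1)), x (m+2)⁆ := by
  rw [List.ofFn_succ' (fun i : Fin (m+2) => x (↑i+1)), List.concat_eq_append,
    List.ofFn_succ, lcomm_append, List.ofFn_succ (f := fun i : Fin (m+1) => x (↑i+1))]
  simp [Fin.val_last]

lemma commute_lie_eq {a b : A} (h : Commute a b) : ⁅a, b⁆ = 0 := by
  rw [Ring.lie_def, sub_eq_zero]; exact h

lemma mul_lie_of_commute (a : A) {p b : A} (h : Commute p b) : ⁅p * a, b⁆ = p * ⁅a, b⁆ := by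
  have hb : b * (p * a) = p * (b * a) := by rw [← mul_assoc, ← h.eq, mul_assoc]
  rw [Ring.lie_def, Ring.lie_def, hb, mul_sub, mul_assoc]

lemma ofFn_prod_succ {M : Type*} [Monoid M] {m : ℕ} (f : Fin (m+1) → M) :
    (List.ofFn f).prod = (List.ofFn fun i : Fin m => f i.castSucc).prod * f (Fin.last m) := by
  rw [List.ofFn_succ', List.concat_eq_append, List.prod_append, List.prod_singleton]

end helpers

section tensor
variable (F : Type*) [Field F] {G H : Type*} [Ring G] [Algebra F G] [Ring H] [Algebra F H]

lemma lie_tmul (a c : G) (b d : H) :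
    ⁅a ⊗ₜ[F] b, c ⊗ₜ[F] d⁆ = ⁅a, c⁆ ⊗ₜ[F] (b * d) + (c * a) ⊗ₜ[F] ⁅b, d⁆ := by
  simp only [Ring.lie_def, Algebra.TensorProduct.tmul_mul_tmul, TensorProduct.sub_tmul,
    TensorProduct.tmul_sub]
  abel

lemma add_lie_tp (x y z : G ⊗[F] H) : ⁅x + y, z⁆ = ⁅x, z⁆ + ⁅y, z⁆ := by
  simp only [Ring.lie_def, add_mul, mul_add]
  abel

lemma two_steps (P R ga gb gc : G) (Q S ha hb hc : H)
    (hP : ∀ y, Commute P y) (hQ : ∀ y, Commute Q y)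
    (hR : ∀ y, Commute R y) (hS : ∀ y, Commute S y)
    (hGc : ∀ a b c : G, Commute ⁅a, b⁆ c) (hHc : ∀ a b c : H, Commute ⁅a, b⁆ c) :
    ⁅⁅P ⊗ₜ[F] (Q * ha) + (R * ga) ⊗ₜ[F] S, gb ⊗ₜ[F] hb⁆, gc ⊗ₜ[F] hc⁆
      = (P * ⁅gb, gc⁆) ⊗ₜ[F] (Q * ⁅ha, hb⁆ * hc)
        + (R * ⁅ga, gb⁆ * gc) ⊗ₜ[F] (S * ⁅hb, hc⁆) := by
  rw [add_lie_tp, lie_tmul, lie_tmul, commute_lie_eq (hP gb), TensorProduct.zero_tmul, zero_add,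
    mul_lie_of_commute ha (hQ hb), ← (hP gb).eq,
    mul_lie_of_commute ga (hR gb), commute_lie_eq (hS hb), TensorProduct.tmul_zero, add_zero,
    add_lie_tp, lie_tmul, lie_tmul,
    mul_lie_of_commute gb (hP gc),
    commute_lie_eq ((hQ hc).mul_left (hHc ha hb hc)), TensorProduct.tmul_zero, add_zero,
    commute_lie_eq ((hR gc).mul_left (hGc ga gb gc)), TensorProduct.zero_tmul, zero_add,
    mul_lie_of_commute hb (hS hc), ← ((hR gc).mul_left (hGc ga gb gc)).eq]

lemma c_four (hGc : ∀ a b c : G, Commute ⁅a, b⁆ c) (hHc : ∀ a b c : H, Commute ⁅a, b⁆ c)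
    (g : ℕ → G) (h : ℕ → H) :
    lcomm (List.ofFn fun i : Fin 4 => (g (↑i+1) ⊗ₜ[F] h (↑i+1) : G ⊗[F] H))
      = (⁅g 1, g 2⁆ * ⁅g 3, g 4⁆) ⊗ₜ[F] (⁅h 1 * h 2, h 3⁆ * h 4)
        + (⁅g 2 * g 1, g 3⁆ * g 4) ⊗ₜ[F] (⁅h 1, h 2⁆ * ⁅h 3, h 4⁆) := by
  have e4 : lcomm (List.ofFn fun i : Fin 4 => (g (↑i+1) ⊗ₜ[F] h (↑i+1) : G ⊗[F] H))
      = ⁅lcomm (List.ofFn fun i : Fin 3 => (g (↑i+1) ⊗ₜ[F] h (↑i+1) : G ⊗[F] H)),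
          g 4 ⊗ₜ[F] h 4⁆ := c_rec (fun j => g j ⊗ₜ[F] h j) 2
  have e3 : lcomm (List.ofFn fun i : Fin 3 => (g (↑i+1) ⊗ₜ[F] h (↑i+1) : G ⊗[F] H))
      = ⁅lcomm (List.ofFn fun i : Fin 2 => (g (↑i+1) ⊗ₜ[F] h (↑i+1) : G ⊗[F] H)),
          g 3 ⊗ₜ[F] h 3⁆ := c_rec (fun j => g j ⊗ₜ[F] h j) 1
  have e2 : lcomm (List.ofFn fun i : Fin 2 => (g (↑i+1) ⊗ₜ[F] h (↑i+1) : G ⊗[F] H))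
      = ⁅g 1 ⊗ₜ[F] h 1, g 2 ⊗ₜ[F] h 2⁆ := by
    rw [List.ofFn_succ, List.ofFn_succ, List.ofFn_zero]
    show lc _ [_] = _
    rw [lc, lc]
    simp only [Fin.val_zero, Fin.val_succ, Fin.isValue]
  rw [e4, e3, e2, lie_tmul, add_lie_tp, lie_tmul, lie_tmul,
    commute_lie_eq (hGc (g 1) (g 2) (g 3)), TensorProduct.zero_tmul, zero_add,
    commute_lie_eq (hHc (h 1) (h 2) (h 3)), TensorProduct.tmul_zero, add_zero,
    ← (hGc (g 1) (g 2) (g 3)).eq,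
    add_lie_tp, lie_tmul, lie_tmul,
    mul_lie_of_commute (g 3) (hGc (g 1) (g 2) (g 4)),
    commute_lie_eq (hHc (h 1 * h 2) (h 3) (h 4)), TensorProduct.tmul_zero, add_zero,
    commute_lie_eq (hGc (g 2 * g 1) (g 3) (g 4)), TensorProduct.zero_tmul, zero_add,
    mul_lie_of_commute (h 3) (hHc (h 1) (h 2) (h 4)),
    ← (hGc (g 2 * g 1) (g 3) (g 4)).eq]

lemma key (hG : ∀ a b c : G, ⁅⁅a, b⁆, c⁆ = 0) (hH : ∀ a b c : H, ⁅⁅a, b⁆, c⁆ = 0)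
    (g : ℕ → G) (h : ℕ → H) (k : ℕ) :
    lcomm (List.ofFn fun i : Fin (2*k+4) => (g (↑i+1) ⊗ₜ[F] h (↑i+1) : G ⊗[F] H))
      = (List.ofFn fun i : Fin (k+2) => ⁅g (2*↑i+1), g (2*↑i+2)⁆).prod
          ⊗ₜ[F] (⁅h 1 * h 2, h 3⁆
            * (List.ofFn fun i : Fin k => ⁅h (2*↑i+4), h (2*↑i+5)⁆).prod * h (2*k+4))
        + (⁅g 2 * g 1, g 3⁆
            * (List.ofFn fun i : Fin k => ⁅g (2*↑i+4), g (2*↑i+5)⁆).prod * g (2*k+4))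
          ⊗ₜ[F] (List.ofFn fun i : Fin (k+2) => ⁅h (2*↑i+1), h (2*↑i+2)⁆).prod := by
  have hGc : ∀ a b c : G, Commute ⁅a, b⁆ c := fun a b c => by
    have := hG a b c; rwa [Ring.lie_def, sub_eq_zero] at this
  have hHc : ∀ a b c : H, Commute ⁅a, b⁆ c := fun a b c => by
    have := hH a b c; rwa [Ring.lie_def, sub_eq_zero] at this
  have hPc : ∀ (m : ℕ) (y : G),
      Commute (List.ofFn fun i : Fin m => ⁅g (2*↑i+1), g (2*↑i+2)⁆).prod y := fun m y =>
    Commute.list_prod_left _ _ (by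
      rintro z hz
      rw [List.mem_ofFn] at hz
      obtain ⟨i, rfl⟩ := hz
      exact hGc _ _ _)
  have hP4c : ∀ (m : ℕ) (y : G),
      Commute (List.ofFn fun i : Fin m => ⁅g (2*↑i+4), g (2*↑i+5)⁆).prod y := fun m y =>
    Commute.list_prod_left _ _ (by
      rintro z hz
      rw [List.mem_ofFn] at hz
      obtain ⟨i, rfl⟩ := hz
      exact hGc _ _ _)
  have hSc : ∀ (m : ℕ) (y : H),
      Commute (List.ofFn fun i : Fin m => ⁅h (2*↑i+1), h (2*↑i+2)⁆).prod y := fun m y =>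
    Commute.list_prod_left _ _ (by
      rintro z hz
      rw [List.mem_ofFn] at hz
      obtain ⟨i, rfl⟩ := hz
      exact hHc _ _ _)
  have hS4c : ∀ (m : ℕ) (y : H),
      Commute (List.ofFn fun i : Fin m => ⁅h (2*↑i+4), h (2*↑i+5)⁆).prod y := fun m y =>
    Commute.list_prod_left _ _ (by
      rintro z hz
      rw [List.mem_ofFn] at hz
      obtain ⟨i, rfl⟩ := hz
      exact hHc _ _ _)
  induction k with
  | zero =>
    have e : lcomm (List.ofFn fun i : Fin (2*0+4) => (g (↑i+1) ⊗ₜ[F] h (↑i+1) : G ⊗[F] H))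
        = (⁅g 1, g 2⁆ * ⁅g 3, g 4⁆) ⊗ₜ[F] (⁅h 1 * h 2, h 3⁆ * h 4)
          + (⁅g 2 * g 1, g 3⁆ * g 4) ⊗ₜ[F] (⁅h 1, h 2⁆ * ⁅h 3, h 4⁆) :=
      c_four F hGc hHc g h
    rw [e]
    norm_num [List.ofFn_succ]
  | succ k ih =>
    have hQ : ∀ y, Commute (⁅h 1 * h 2, h 3⁆
        * (List.ofFn fun i : Fin k => ⁅h (2*↑i+4), h (2*↑i+5)⁆).prod) y := fun y =>
      (hHc _ _ y).mul_left (hS4c k y)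
    have hR : ∀ y, Commute (⁅g 2 * g 1, g 3⁆
        * (List.ofFn fun i : Fin k => ⁅g (2*↑i+4), g (2*↑i+5)⁆).prod) y := fun y =>
      (hGc _ _ y).mul_left (hP4c k y)
    rw [show 2*(k+1)+4 = 2*k+6 from by ring]
    have e1 : lcomm (List.ofFn fun i : Fin (2*k+6) => (g (↑i+1) ⊗ₜ[F] h (↑i+1) : G ⊗[F] H))
        = ⁅lcomm (List.ofFn fun i : Fin (2*k+5) => (g (↑i+1) ⊗ₜ[F] h (↑i+1) : G ⊗[F] H)),
            g (2*k+6) ⊗ₜ[F] h (2*k+6)⁆ := c_rec (fun j => g j ⊗ₜ[F] h j) (2*k+4)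
    have e2 : lcomm (List.ofFn fun i : Fin (2*k+5) => (g (↑i+1) ⊗ₜ[F] h (↑i+1) : G ⊗[F] H))
        = ⁅lcomm (List.ofFn fun i : Fin (2*k+4) => (g (↑i+1) ⊗ₜ[F] h (↑i+1) : G ⊗[F] H)),
            g (2*k+5) ⊗ₜ[F] h (2*k+5)⁆ := c_rec (fun j => g j ⊗ₜ[F] h j) (2*k+3)
    rw [e1, e2, ih,
      two_steps F _ _ _ _ _ _ _ _ _ _ (hPc (k+2)) hQ hR (hSc (k+2)) hGc hHc]
    have sp1 : (List.ofFn fun i : Fin (k+1+2) => ⁅g (2*↑i+1), g (2*↑i+2)⁆).prod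
        = (List.ofFn fun i : Fin (k+2) => ⁅g (2*↑i+1), g (2*↑i+2)⁆).prod
          * ⁅g (2*k+5), g (2*k+6)⁆ := by
      refine (ofFn_prod_succ _).trans ?_
      simp only [Fin.coe_castSucc, Fin.val_last]
      rw [show 2*(k+2)+1 = 2*k+5 from by ring, show 2*(k+2)+2 = 2*k+6 from by ring]
    have sp2 : (List.ofFn fun i : Fin (k+1) => ⁅h (2*↑i+4), h (2*↑i+5)⁆).prod
        = (List.ofFn fun i : Fin k => ⁅h (2*↑i+4), h (2*↑i+5)⁆).prod
          * ⁅h (2*k+4), h (2*k+5)⁆ := by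
      refine (ofFn_prod_succ _).trans ?_
      simp
    have sp3 : (List.ofFn fun i : Fin (k+1) => ⁅g (2*↑i+4), g (2*↑i+5)⁆).prod
        = (List.ofFn fun i : Fin k => ⁅g (2*↑i+4), g (2*↑i+5)⁆).prod
          * ⁅g (2*k+4), g (2*k+5)⁆ := by
      refine (ofFn_prod_succ _).trans ?_
      simp
    have sp4 : (List.ofFn fun i : Fin (k+1+2) => ⁅h (2*↑i+1), h (2*↑i+2)⁆).prod
        = (List.ofFn fun i : Fin (k+2) => ⁅h (2*↑i+1), h (2*↑i+2)⁆).prod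
          * ⁅h (2*k+5), h (2*k+6)⁆ := by
      refine (ofFn_prod_succ _).trans ?_
      simp only [Fin.coe_castSucc, Fin.val_last]
      rw [show 2*(k+2)+1 = 2*k+5 from by ring, show 2*(k+2)+2 = 2*k+6 from by ring]
    rw [sp1, sp2, sp3, sp4]
    simp only [mul_assoc]

end tensor

/-- Lemma 2.1 of [DK17], even case: formula for
`c₂ₙ = [g₁ ⊗ h₁, …, g₂ₙ ⊗ h₂ₙ]` in `G ⊗ H` when `n > 1`. The elements `g i, h i` are indexed
by `1, …, 2n`. -/
theorem statement_4 (F : Type*) [Field F]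
    (G H : Type*) [Ring G] [Algebra F G] [Ring H] [Algebra F H]
    (hG : ∀ a b c : G, ⁅⁅a, b⁆, c⁆ = 0) (hH : ∀ a b c : H, ⁅⁅a, b⁆, c⁆ = 0)
    (n : ℕ) (hn : 1 < n) (g : ℕ → G) (h : ℕ → H) :
    lcomm (List.ofFn fun i : Fin (2 * n) => (g (i + 1) ⊗ₜ[F] h (i + 1) : G ⊗[F] H))
      = (List.ofFn fun i : Fin n => ⁅g (2 * i + 1), g (2 * i + 2)⁆).prod
          ⊗ₜ[F] (⁅h 1 * h 2, h 3⁆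
            * (List.ofFn fun i : Fin (n - 2) => ⁅h (2 * i + 4), h (2 * i + 5)⁆).prod
            * h (2 * n))
        + (⁅g 2 * g 1, g 3⁆
            * (List.ofFn fun i : Fin (n - 2) => ⁅g (2 * i + 4), g (2 * i + 5)⁆).prod
            * g (2 * n))
          ⊗ₜ[F] (List.ofFn fun i : Fin n => ⁅h (2 * i + 1), h (2 * i + 2)⁆).prod := by
  obtain ⟨k, rfl⟩ : ∃ k, n = k + 2 := ⟨n - 2, by omega⟩
  rw [show 2 * (k + 2) = 2 * k + 4 from by ring, show k + 2 - 2 = k from by omega]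
  exact key F hG hH g h k
end

section
/- Let G and H be unital associative F-algebras with all triple commutators zero, and suppose that [f_1, f_2][f_3, f_4]···[f_{2n-1}, f_{2n}] = 0 for all f_j ∈ H. Then the tensor product algebra G ⊗ H is Lie nilpotent of class at most 2n, i.e., [u_1, u_2, ..., u_{2n+1}] = 0 for all u_i ∈ G ⊗ H. -/
open scoped TensorProduct

section Aux

variable {F : Type*} [Field F] {G H : Type*} [Ring G] [Algebra F G] [Ring H] [Algebra F H]

lemma rlie_addl {A : Type*} [Ring A] (a b c : A) : ⁅a + b, c⁆ = ⁅a, c⁆ + ⁅b, c⁆ := by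
  simp only [Ring.lie_def, add_mul, mul_add]; abel

lemma rlie_addr {A : Type*} [Ring A] (a b c : A) : ⁅a, b + c⁆ = ⁅a, b⁆ + ⁅a, c⁆ := by
  simp only [Ring.lie_def, add_mul, mul_add]; abel

lemma rlie_zerol {A : Type*} [Ring A] (a : A) : ⁅(0 : A), a⁆ = 0 := by
  simp [Ring.lie_def]

lemma rlie_zeror {A : Type*} [Ring A] (a : A) : ⁅a, (0 : A)⁆ = 0 := by
  simp [Ring.lie_def]

lemma rlie_smul {A : Type*} [Ring A] [Algebra F A] (t : F) (a c : A) :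
    ⁅t • a, c⁆ = t • ⁅a, c⁆ := by
  simp only [Ring.lie_def, smul_mul_assoc, mul_smul_comm, smul_sub]

/-- `x` is a product of `j` commutators times an element. -/
def isHC {H : Type*} [Ring H] (j : ℕ) (x : H) : Prop :=
  ∃ (L : List H) (h : H), L.length = j ∧ (∀ c ∈ L, ∃ a b : H, c = ⁅a, b⁆) ∧ x = L.prod * h

lemma comm_central (hH : ∀ a b c : H, ⁅⁅a, b⁆, c⁆ = 0) (a b y : H) :
    ⁅a, b⁆ * y = y * ⁅a, b⁆ := by
  have h := hH a b y
  rw [Ring.lie_def ⁅a, b⁆ y] at h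
  exact sub_eq_zero.1 h

lemma prod_central (hH : ∀ a b c : H, ⁅⁅a, b⁆, c⁆ = 0) :
    ∀ (L : List H), (∀ c ∈ L, ∃ a b : H, c = ⁅a, b⁆) →
      ∀ y : H, L.prod * y = y * L.prod := by
  intro L
  induction L with
  | nil => intro _ y; simp
  | cons c l ih =>
      intro hL y
      obtain ⟨a, b, rfl⟩ := hL c List.mem_cons_self
      have h1 := ih (fun c hc => hL c (List.mem_cons_of_mem _ hc))
      simp only [List.prod_cons]
      rw [mul_assoc, h1 y, ← mul_assoc, comm_central hH, mul_assoc]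

lemma isHC_mul {j : ℕ} {x : H} (hx : isHC j x) (h' : H) : isHC j (x * h') := by
  obtain ⟨L, h, hlen, hc, rfl⟩ := hx
  exact ⟨L, h * h', hlen, hc, by rw [mul_assoc]⟩

lemma isHC_lie (hH : ∀ a b c : H, ⁅⁅a, b⁆, c⁆ = 0) {j : ℕ} {x : H} (hx : isHC j x) (h' : H) :
    isHC (j + 1) ⁅x, h'⁆ := by
  obtain ⟨L, h, hlen, hc, rfl⟩ := hx
  refine ⟨L ++ [⁅h, h'⁆], 1, by simp [hlen], ?_, ?_⟩
  · intro c hcm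
    rcases List.mem_append.1 hcm with h1 | h1
    · exact hc c h1
    · simp at h1; exact ⟨h, h', h1⟩
  · rw [List.prod_append, List.prod_singleton, mul_one, Ring.lie_def, Ring.lie_def]
    rw [mul_sub, mul_assoc]
    congr 1
    rw [← mul_assoc, ← prod_central hH L hc h', mul_assoc]

def GoodSet (F G H : Type*) [Field F] [Ring G] [Algebra F G] [Ring H] [Algebra F H]
    (μ : ℕ) : Set (G ⊗[F] H) :=
  {v | (∃ (g : G) (x : H) (j : ℕ), μ ≤ 2 * j ∧ isHC j x ∧ v = g ⊗ₜ[F] x)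
     ∨ (∃ (d : G) (x : H) (j : ℕ), (∀ g : G, d * g = g * d) ∧ μ ≤ 2 * j + 1 ∧ isHC j x
          ∧ v = d ⊗ₜ[F] x)}

lemma key_step (hG : ∀ a b c : G, ⁅⁅a, b⁆, c⁆ = 0) (hH : ∀ a b c : H, ⁅⁅a, b⁆, c⁆ = 0)
    {μ : ℕ} {v : G ⊗[F] H} (hv : v ∈ GoodSet F G H μ) (g' : G) (h' : H) :
    ⁅v, g' ⊗ₜ[F] h'⁆ ∈ Submodule.span F (GoodSet F G H (μ + 1)) := by
  rcases hv with ⟨g, x, j, hμ, hx, rfl⟩ | ⟨d, x, j, hd, hμ, hx, rfl⟩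
  · have key : ⁅g ⊗ₜ[F] x, g' ⊗ₜ[F] h'⁆
        = (g' * g) ⊗ₜ[F] ⁅x, h'⁆ + ⁅g, g'⁆ ⊗ₜ[F] (x * h') := by
      simp only [Ring.lie_def, Algebra.TensorProduct.tmul_mul_tmul,
        TensorProduct.tmul_sub, TensorProduct.sub_tmul]
      abel
    rw [key]
    refine Submodule.add_mem _ (Submodule.subset_span ?_) (Submodule.subset_span ?_)
    · exact Or.inl ⟨g' * g, ⁅x, h'⁆, j + 1, by omega, isHC_lie hH hx h', rfl⟩
    · refine Or.inr ⟨⁅g, g'⁆, x * h', j, ?_, by omega, isHC_mul hx h', rfl⟩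
      intro g₀
      have h := hG g g' g₀
      rw [Ring.lie_def ⁅g, g'⁆ g₀] at h
      exact sub_eq_zero.1 h
  · have key : ⁅d ⊗ₜ[F] x, g' ⊗ₜ[F] h'⁆ = (g' * d) ⊗ₜ[F] ⁅x, h'⁆ := by
      simp only [Ring.lie_def, Algebra.TensorProduct.tmul_mul_tmul,
        TensorProduct.tmul_sub]
      rw [hd g']
    rw [key]
    exact Submodule.subset_span
      (Or.inl ⟨g' * d, ⁅x, h'⁆, j + 1, by omega, isHC_lie hH hx h', rfl⟩)

lemma lie_mem_span (hG : ∀ a b c : G, ⁅⁅a, b⁆, c⁆ = 0) (hH : ∀ a b c : H, ⁅⁅a, b⁆, c⁆ = 0)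
    {μ : ℕ} {v : G ⊗[F] H} (hv : v ∈ Submodule.span F (GoodSet F G H μ)) (w : G ⊗[F] H) :
    ⁅v, w⁆ ∈ Submodule.span F (GoodSet F G H (μ + 1)) := by
  induction w using TensorProduct.induction_on with
  | zero => rw [rlie_zeror]; exact Submodule.zero_mem _
  | tmul g' h' =>
      induction hv using Submodule.span_induction with
      | mem x hx => exact key_step hG hH hx g' h'
      | zero => rw [rlie_zerol]; exact Submodule.zero_mem _
      | add x y hx hy px py => rw [rlie_addl]; exact Submodule.add_mem _ px py
      | smul a x hx px => rw [rlie_smul]; exact Submodule.smul_mem _ _ px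
  | add w₁ w₂ p₁ p₂ => rw [rlie_addr]; exact Submodule.add_mem _ p₁ p₂

lemma mem_good_zero (v : G ⊗[F] H) : v ∈ Submodule.span F (GoodSet F G H 0) := by
  induction v using TensorProduct.induction_on with
  | zero => exact Submodule.zero_mem _
  | tmul g h =>
      exact Submodule.subset_span
        (Or.inl ⟨g, h, 0, le_refl _, ⟨[], h, rfl, by simp, by simp⟩, rfl⟩)
  | add v₁ v₂ p₁ p₂ => exact Submodule.add_mem _ p₁ p₂

lemma lc_mem_span (hG : ∀ a b c : G, ⁅⁅a, b⁆, c⁆ = 0) (hH : ∀ a b c : H, ⁅⁅a, b⁆, c⁆ = 0) :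
    ∀ (l : List (G ⊗[F] H)) (μ : ℕ) (v : G ⊗[F] H),
      v ∈ Submodule.span F (GoodSet F G H μ) →
      lc v l ∈ Submodule.span F (GoodSet F G H (μ + l.length)) := by
  intro l
  induction l with
  | nil => intro μ v hv; simpa [lc] using hv
  | cons b l ih =>
      intro μ v hv
      have h := ih (μ + 1) ⁅v, b⁆ (lie_mem_span hG hH hv b)
      simp only [lc, List.length_cons]
      convert h using 3
      omega

lemma prod_of_comms_eq_zero (n : ℕ)
    (hprod : ∀ f : ℕ → H, (List.ofFn fun i : Fin n => ⁅f (2 * i + 1), f (2 * i + 2)⁆).prod = 0)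
    (L : List H) (hlen : L.length = n) (hc : ∀ c ∈ L, ∃ a b : H, c = ⁅a, b⁆) :
    L.prod = 0 := by
  have ab : ∀ i : Fin n, ∃ p : H × H, L.get ⟨i, by omega⟩ = ⁅p.1, p.2⁆ := by
    intro i
    obtain ⟨a, b, hab⟩ := hc (L.get ⟨i, by omega⟩) (L.get_mem _)
    exact ⟨(a, b), hab⟩
  choose P hP using ab
  set A : ℕ → H := fun i => if h : i < n then (P ⟨i, h⟩).1 else 0 with hA
  set B : ℕ → H := fun i => if h : i < n then (P ⟨i, h⟩).2 else 0 with hB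
  set f : ℕ → H := fun k => if k % 2 = 1 then A (k / 2) else B (k / 2 - 1) with hf
  have hof : (List.ofFn fun i : Fin n => ⁅f (2 * i + 1), f (2 * i + 2)⁆) = L := by
    apply List.ext_getElem
    · simp [hlen]
    · intro i h1 h2
      have hi : i < n := by simpa using h1
      simp only [List.getElem_ofFn]
      have e1 : f (2 * i + 1) = (P ⟨i, hi⟩).1 := by
        have q1 : (2 * i + 1) % 2 = 1 := by omega
        have q2 : (2 * i + 1) / 2 = i := by omega
        simp [hf, hA, q1, q2, hi]
      have e2 : f (2 * i + 2) = (P ⟨i, hi⟩).2 := by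
        have q1 : (2 * i + 2) % 2 = 0 := by omega
        have q2 : (2 * i + 2) / 2 - 1 = i := by omega
        simp [hf, hB, q1, q2, hi]
      rw [e1, e2, ← hP ⟨i, hi⟩]
      simp [List.get_eq_getElem]
  rw [← hof]
  exact hprod f

lemma isHC_eq_zero (n : ℕ)
    (hprod : ∀ f : ℕ → H, (List.ofFn fun i : Fin n => ⁅f (2 * i + 1), f (2 * i + 2)⁆).prod = 0)
    {j : ℕ} {x : H} (hj : n ≤ j) (hx : isHC j x) : x = 0 := by
  obtain ⟨L, h, hlen, hc, rfl⟩ := hx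
  have h1 : (L.take n).prod = 0 := by
    apply prod_of_comms_eq_zero n hprod
    · simp [hlen]; omega
    · intro c hcm; exact hc c (List.take_subset n L hcm)
  have h2 : L.prod = (L.take n).prod * (L.drop n).prod := by
    rw [List.prod_take_mul_prod_drop]
  rw [h2, h1, zero_mul, zero_mul]

lemma good_final (n : ℕ)
    (hprod : ∀ f : ℕ → H, (List.ofFn fun i : Fin n => ⁅f (2 * i + 1), f (2 * i + 2)⁆).prod = 0)
    {v : G ⊗[F] H} (hv : v ∈ Submodule.span F (GoodSet F G H (2 * n))) : v = 0 := by
  have hsub : GoodSet F G H (2 * n) ⊆ {(0 : G ⊗[F] H)} := by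
    rintro v (⟨g, x, j, hμ, hx, rfl⟩ | ⟨d, x, j, hd, hμ, hx, rfl⟩)
    · have hx0 : x = 0 := isHC_eq_zero n hprod (by omega) hx
      simp [hx0]
    · have hx0 : x = 0 := isHC_eq_zero n hprod (by omega) hx
      simp [hx0]
  have hle : Submodule.span F (GoodSet F G H (2 * n)) ≤ ⊥ := by
    rw [← Submodule.span_zero_singleton F]
    exact Submodule.span_mono hsub
  simpa using hle hv

end Aux

/-- If every product of `n` commutators of pairs of elements of `H` vanishes, then
`G ⊗ H` is Lie nilpotent of class at most `2n`. -/
theorem statement_6 (F : Type*) [Field F]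
    (G H : Type*) [Ring G] [Algebra F G] [Ring H] [Algebra F H]
    (hG : ∀ a b c : G, ⁅⁅a, b⁆, c⁆ = 0) (hH : ∀ a b c : H, ⁅⁅a, b⁆, c⁆ = 0)
    (n : ℕ)
    (hprod : ∀ f : ℕ → H,
      (List.ofFn fun i : Fin n => ⁅f (2 * i + 1), f (2 * i + 2)⁆).prod = 0)
    (u : ℕ → G ⊗[F] H) :
    lcomm (List.ofFn fun i : Fin (2 * n + 1) => u (i + 1)) = 0 := by
  rw [List.ofFn_succ]
  show lc (u (0 + 1)) (List.ofFn fun i : Fin (2 * n) => u (i.succ + 1)) = 0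
  apply good_final n hprod
  have h := lc_mem_span hG hH (List.ofFn fun i : Fin (2 * n) => u (i.succ + 1)) 0
    (u (0 + 1)) (mem_good_zero _)
  simpa using h
end

section
/- Let E_r be the r-generated unital Grassmann algebra over a field F of characteristic ≠ 2 (the subalgebra of E generated by e_1, ..., e_r). Then for any f_1, ..., f_{r+2} ∈ E_r, the product of commutators [f_1, f_2][f_3, f_4]···[f_{r+1}, f_{r+2}] equals 0. -/
open scoped TensorProduct

/-- The infinite-dimensional Grassmann (exterior) algebra over `F`, on a vector space with
basis `e₁, e₂, …` indexed by `ℕ`. -/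
abbrev GrassmannAlg (F : Type*) [Field F] := ExteriorAlgebra F (ℕ →₀ F)

/-- The generators `eᵢ` of the Grassmann algebra. -/
noncomputable def grassGen (F : Type*) [Field F] (i : ℕ) : GrassmannAlg F :=
  ExteriorAlgebra.ι F (Finsupp.single i (1 : F))

/-- The `r`-generated unital Grassmann subalgebra `E_r`, generated by `e₁, …, e_r`. -/
noncomputable def GrassmannSub (F : Type*) [Field F] (r : ℕ) : Subalgebra F (GrassmannAlg F) :=
  Algebra.adjoin F (grassGen F '' {i | 1 ≤ i ∧ i ≤ r})

section Proof9

open ExteriorAlgebra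

variable {F : Type*} [Field F]

private lemma mul_iota (m : ℕ →₀ F) (x : GrassmannAlg F) :
    x * ExteriorAlgebra.ι F m = ExteriorAlgebra.ι F m * CliffordAlgebra.involute x := by
  induction x using CliffordAlgebra.induction with
  | algebraMap r => rw [CliffordAlgebra.involute.commutes, Algebra.commutes]
  | ι v =>
      show ExteriorAlgebra.ι F v * _ = _
      rw [CliffordAlgebra.involute_ι]
      show _ = ExteriorAlgebra.ι F m * -ExteriorAlgebra.ι F v
      rw [mul_neg, eq_neg_iff_add_eq_zero]
      exact ExteriorAlgebra.ι_add_mul_swap v m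
  | mul x y hx hy => rw [mul_assoc, hy, ← mul_assoc, hx, map_mul, mul_assoc]
  | add x y hx hy => rw [add_mul, hx, hy, map_add, mul_add]

private lemma involute_mem {r : ℕ} {x : GrassmannAlg F} (hx : x ∈ GrassmannSub F r) :
    CliffordAlgebra.involute x ∈ GrassmannSub F r := by
  induction hx using Algebra.adjoin_induction with
  | mem y hy =>
      obtain ⟨i, hi, rfl⟩ := hy
      have : CliffordAlgebra.involute (grassGen F i) = -grassGen F i :=
        CliffordAlgebra.involute_ι _
      rw [this]
      exact neg_mem (Algebra.subset_adjoin ⟨i, hi, rfl⟩)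
  | algebraMap r => rw [CliffordAlgebra.involute.commutes]; exact algebraMap_mem _ _
  | add x y hx hy hx' hy' => rw [map_add]; exact add_mem hx' hy'
  | mul x y hx hy hx' hy' => rw [map_mul]; exact mul_mem hx' hy'

/-- The span of the generators `e₁,…,e_r`. -/
noncomputable def Vgen (F : Type*) [Field F] (r : ℕ) : Submodule F (GrassmannAlg F) :=
  Submodule.span F (grassGen F '' {i | 1 ≤ i ∧ i ≤ r})

variable {r : ℕ}

private lemma hAA : (Subalgebra.toSubmodule (GrassmannSub F r)) *
    (Subalgebra.toSubmodule (GrassmannSub F r)) ≤ Subalgebra.toSubmodule (GrassmannSub F r) :=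
  Submodule.mul_le.2 fun a ha b hb => (GrassmannSub F r).mul_mem ha hb

private lemma hAV : (Subalgebra.toSubmodule (GrassmannSub F r)) * Vgen F r ≤
    Vgen F r * Subalgebra.toSubmodule (GrassmannSub F r) := by
  refine Submodule.mul_le.2 fun a ha v hv => ?_
  induction hv using Submodule.span_induction with
  | mem y hy =>
      obtain ⟨i, hi, rfl⟩ := hy
      rw [grassGen, mul_iota]
      exact Submodule.mul_mem_mul (Submodule.subset_span ⟨i, hi, rfl⟩) (involute_mem ha)
  | zero => rw [mul_zero]; exact zero_mem _
  | add x y hx hy hx' hy' => rw [mul_add]; exact add_mem hx' hy'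
  | smul c x hx hx' => rw [mul_smul_comm]; exact Submodule.smul_mem _ _ hx'

private lemma hAVpow (m : ℕ) : (Subalgebra.toSubmodule (GrassmannSub F r)) * Vgen F r ^ m ≤
    Vgen F r ^ m * Subalgebra.toSubmodule (GrassmannSub F r) := by
  induction m with
  | zero => rw [pow_zero, Submodule.mul_one, Submodule.one_mul]
  | succ n ih =>
      rw [pow_succ, ← mul_assoc]
      calc Subalgebra.toSubmodule (GrassmannSub F r) * Vgen F r ^ n * Vgen F r
          ≤ Vgen F r ^ n * Subalgebra.toSubmodule (GrassmannSub F r) * Vgen F r :=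
            mul_le_mul' ih le_rfl
        _ = Vgen F r ^ n * (Subalgebra.toSubmodule (GrassmannSub F r) * Vgen F r) := mul_assoc ..
        _ ≤ Vgen F r ^ n * (Vgen F r * Subalgebra.toSubmodule (GrassmannSub F r)) :=
            mul_le_mul' le_rfl hAV
        _ = Vgen F r ^ n * Vgen F r * Subalgebra.toSubmodule (GrassmannSub F r) :=
            (mul_assoc ..).symm

private lemma one_mem_A : (1 : GrassmannAlg F) ∈ Subalgebra.toSubmodule (GrassmannSub F r) :=
  one_mem (GrassmannSub F r)

/-- A commutator of two elements of `E_r` lies in `V² · E_r`. -/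
private lemma comm_mem {a b : GrassmannAlg F} (ha : a ∈ GrassmannSub F r)
    (hb : b ∈ GrassmannSub F r) :
    ⁅a, b⁆ ∈ Vgen F r ^ 2 * Subalgebra.toSubmodule (GrassmannSub F r) := by
  set D := Vgen F r ^ 2 * Subalgebra.toSubmodule (GrassmannSub F r) with hD
  have hDA : ∀ x ∈ D, ∀ c ∈ GrassmannSub F r, x * c ∈ D := by
    intro x hx c hc
    have : D * Subalgebra.toSubmodule (GrassmannSub F r) ≤ D := by
      rw [hD, mul_assoc]
      exact mul_le_mul' le_rfl hAA
    exact this (Submodule.mul_mem_mul hx hc)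
  have hAD : ∀ c ∈ GrassmannSub F r, ∀ x ∈ D, c * x ∈ D := by
    intro c hc x hx
    have : Subalgebra.toSubmodule (GrassmannSub F r) * D ≤ D := by
      rw [hD, ← mul_assoc]
      calc Subalgebra.toSubmodule (GrassmannSub F r) * Vgen F r ^ 2 *
            Subalgebra.toSubmodule (GrassmannSub F r)
          ≤ Vgen F r ^ 2 * Subalgebra.toSubmodule (GrassmannSub F r) *
            Subalgebra.toSubmodule (GrassmannSub F r) :=
            mul_le_mul' (hAVpow 2) le_rfl
        _ = Vgen F r ^ 2 * (Subalgebra.toSubmodule (GrassmannSub F r) *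
            Subalgebra.toSubmodule (GrassmannSub F r)) := mul_assoc ..
        _ ≤ D := mul_le_mul' le_rfl hAA
    exact this (Submodule.mul_mem_mul hc hx)
  -- generators: commutator of two generators
  have hgen : ∀ x ∈ grassGen F '' {i | 1 ≤ i ∧ i ≤ r},
      ∀ y ∈ grassGen F '' {i | 1 ≤ i ∧ i ≤ r}, ⁅x, y⁆ ∈ D := by
    rintro _ ⟨i, hi, rfl⟩ _ ⟨j, hj, rfl⟩
    have hanti : grassGen F i * grassGen F j + grassGen F j * grassGen F i = 0 :=
      ExteriorAlgebra.ι_add_mul_swap _ _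
    have : ⁅grassGen F i, grassGen F j⁆ = (2 : F) • (grassGen F i * grassGen F j) := by
      rw [Ring.lie_def, two_smul]
      have : grassGen F j * grassGen F i = -(grassGen F i * grassGen F j) := by
        rw [eq_neg_iff_add_eq_zero, add_comm]; exact hanti
      rw [this, sub_neg_eq_add]
    rw [this]
    refine Submodule.smul_mem _ _ ?_
    have hij : grassGen F i * grassGen F j ∈ Vgen F r ^ 2 := by
      rw [pow_two]
      exact Submodule.mul_mem_mul (Submodule.subset_span ⟨i, hi, rfl⟩)
        (Submodule.subset_span ⟨j, hj, rfl⟩)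
    simpa using Submodule.mul_mem_mul hij one_mem_A
  -- inner induction: for x a generator
  have hgen_all : ∀ x ∈ grassGen F '' {i | 1 ≤ i ∧ i ≤ r},
      ∀ b, b ∈ GrassmannSub F r → ⁅x, b⁆ ∈ D := by
    intro x hx b hbmem
    have hxA : x ∈ GrassmannSub F r := Algebra.subset_adjoin hx
    induction hbmem using Algebra.adjoin_induction with
    | mem y hy => exact hgen x hx y hy
    | algebraMap c =>
        have : ⁅x, algebraMap F (GrassmannAlg F) c⁆ = 0 := by
          rw [Ring.lie_def, Algebra.commutes, sub_self]
        rw [this]; exact zero_mem _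
    | add y z hy hz hy' hz' =>
        have : ⁅x, y + z⁆ = ⁅x, y⁆ + ⁅x, z⁆ := by simp only [Ring.lie_def]; noncomm_ring
        rw [this]; exact add_mem hy' hz'
    | mul y z hy hz hy' hz' =>
        have : ⁅x, y * z⁆ = ⁅x, y⁆ * z + y * ⁅x, z⁆ := by
          simp only [Ring.lie_def]; noncomm_ring
        rw [this]
        exact add_mem (hDA _ hy' z hz) (hAD y hy _ hz')
  induction ha using Algebra.adjoin_induction with
  | mem x hx => exact hgen_all x hx b hb
  | algebraMap c =>
      have : ⁅algebraMap F (GrassmannAlg F) c, b⁆ = 0 := by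
        rw [Ring.lie_def, Algebra.commutes, sub_self]
      rw [this]; exact zero_mem _
  | add x y hx hy hx' hy' =>
      have : ⁅x + y, b⁆ = ⁅x, b⁆ + ⁅y, b⁆ := by simp only [Ring.lie_def]; noncomm_ring
      rw [this]; exact add_mem hx' hy'
  | mul x y hx hy hx' hy' =>
      have : ⁅x * y, b⁆ = x * ⁅y, b⁆ + ⁅x, b⁆ * y := by
        simp only [Ring.lie_def]; noncomm_ring
      rw [this]
      exact add_mem (hAD x hx _ hy') (hDA _ hx' y hy)

private lemma prod_mem_pow : ∀ l : List (GrassmannAlg F),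
    (∀ x ∈ l, x ∈ Vgen F r ^ 2 * Subalgebra.toSubmodule (GrassmannSub F r)) →
    l.prod ∈ Vgen F r ^ (2 * l.length) * Subalgebra.toSubmodule (GrassmannSub F r) := by
  intro l
  induction l with
  | nil =>
      intro _
      simp only [List.prod_nil, List.length_nil, Nat.mul_zero, pow_zero, Submodule.one_mul]
      exact one_mem_A
  | cons x l ih =>
      intro h
      have hx := h x (List.mem_cons_self)
      have hl := ih fun y hy => h y (List.mem_cons_of_mem _ hy)
      rw [List.prod_cons, List.length_cons]
      have hmem := Submodule.mul_mem_mul hx hl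
      have hle : (Vgen F r ^ 2 * Subalgebra.toSubmodule (GrassmannSub F r)) *
          (Vgen F r ^ (2 * l.length) * Subalgebra.toSubmodule (GrassmannSub F r)) ≤
          Vgen F r ^ (2 * (l.length + 1)) * Subalgebra.toSubmodule (GrassmannSub F r) := by
        calc (Vgen F r ^ 2 * Subalgebra.toSubmodule (GrassmannSub F r)) *
              (Vgen F r ^ (2 * l.length) * Subalgebra.toSubmodule (GrassmannSub F r))
            = Vgen F r ^ 2 * ((Subalgebra.toSubmodule (GrassmannSub F r) *
              Vgen F r ^ (2 * l.length)) * Subalgebra.toSubmodule (GrassmannSub F r)) := by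
              rw [mul_assoc, mul_assoc]
          _ ≤ Vgen F r ^ 2 * ((Vgen F r ^ (2 * l.length) *
              Subalgebra.toSubmodule (GrassmannSub F r)) *
              Subalgebra.toSubmodule (GrassmannSub F r)) :=
              mul_le_mul' le_rfl (mul_le_mul' (hAVpow _) le_rfl)
          _ = Vgen F r ^ 2 * (Vgen F r ^ (2 * l.length) *
              (Subalgebra.toSubmodule (GrassmannSub F r) *
              Subalgebra.toSubmodule (GrassmannSub F r))) := by rw [mul_assoc]
          _ ≤ Vgen F r ^ 2 * (Vgen F r ^ (2 * l.length) *
              Subalgebra.toSubmodule (GrassmannSub F r)) :=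
              mul_le_mul' le_rfl (mul_le_mul' le_rfl hAA)
          _ = Vgen F r ^ (2 * (l.length + 1)) * Subalgebra.toSubmodule (GrassmannSub F r) := by
              rw [← mul_assoc, ← pow_add]
              ring_nf
      exact hle hmem

private lemma Vpow_eq_bot : Vgen F r ^ (r + 1) = ⊥ := by
  rw [Vgen, Submodule.span_pow, eq_bot_iff, Submodule.span_le]
  intro x hx
  rw [Set.mem_pow] at hx
  obtain ⟨g, hg⟩ := hx
  choose j hj hgj using fun i => (g i).2
  have : ∀ i : Fin (r + 1), (g i : GrassmannAlg F) =
      ExteriorAlgebra.ι F (Finsupp.single (j i) (1 : F)) := fun i => (hgj i).symm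
  have hprod : x = ExteriorAlgebra.ιMulti F (r + 1) (fun i => Finsupp.single (j i) (1 : F)) := by
    rw [ExteriorAlgebra.ιMulti_apply, ← hg]
    exact congrArg List.prod (congrArg List.ofFn (funext this))
  -- pigeonhole
  have hcard : Fintype.card (Fin r) < Fintype.card (Fin (r + 1)) := by simp
  have hjr : ∀ i, j i - 1 < r := by
    intro i
    have := (hj i).1
    have := (hj i).2
    omega
  obtain ⟨i₁, i₂, hne, heq⟩ :=
    Fintype.exists_ne_map_eq_of_card_lt (fun i : Fin (r + 1) => (⟨j i - 1, hjr i⟩ : Fin r)) hcard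
  have hjeq : j i₁ = j i₂ := by
    have h1 := (hj i₁).1
    have h2 := (hj i₂).1
    simp only [Fin.mk.injEq] at heq
    omega
  have := AlternatingMap.map_eq_zero_of_eq (ExteriorAlgebra.ιMulti F (r + 1))
    (fun i => Finsupp.single (j i) (1 : F))
    (show (Finsupp.single (j i₁) (1 : F)) = Finsupp.single (j i₂) 1 by rw [hjeq]) hne
  rw [hprod, this]
  exact Submodule.zero_mem ⊥
private lemma Vpow_r2_eq_bot :
    Vgen F r ^ (r + 2) * Subalgebra.toSubmodule (GrassmannSub F r) = ⊥ := by
  have h1 : Vgen F r ^ (r + 2) = ⊥ := by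
    have : Vgen F r ^ (r + 2) = Vgen F r ^ (r + 1) * Vgen F r := by rw [← pow_succ]
    rw [this, Vpow_eq_bot, Submodule.bot_mul]
  rw [h1, Submodule.bot_mul]

end Proof9

/-- In `E_r` (with `r` even), any product of commutators
`[f₁,f₂][f₃,f₄]⋯[f_{r+1},f_{r+2}]` vanishes. -/
theorem statement_9 (F : Type*) [Field F] (hF : ringChar F ≠ 2)
    (r : ℕ) (hr : Even r) (f : ℕ → GrassmannAlg F)
    (hf : ∀ i, 1 ≤ i → i ≤ r + 2 → f i ∈ GrassmannSub F r) :
    (List.ofFn fun i : Fin ((r + 2) / 2) => ⁅f (2 * i + 1), f (2 * i + 2)⁆).prod = 0 := by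
  obtain ⟨m, hm⟩ := hr
  set l := (List.ofFn fun i : Fin ((r + 2) / 2) => ⁅f (2 * i + 1), f (2 * i + 2)⁆) with hl
  have hlen : l.length = (r + 2) / 2 := by rw [hl, List.length_ofFn]
  have hmem : ∀ x ∈ l,
      x ∈ Vgen F r ^ 2 * Subalgebra.toSubmodule (GrassmannSub F r) := by
    intro x hx
    rw [hl, List.mem_ofFn] at hx
    obtain ⟨i, rfl⟩ := hx
    have hi := i.isLt
    have h1 : 1 ≤ 2 * (i : ℕ) + 1 := by omega
    have h2 : 2 * (i : ℕ) + 2 ≤ r + 2 := by omega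
    exact comm_mem (hf _ h1 (by omega)) (hf _ (by omega) h2)
  have hp := prod_mem_pow l hmem
  have h2l : 2 * l.length = r + 2 := by omega
  rw [h2l, Vpow_r2_eq_bot, Submodule.mem_bot] at hp
  exact hp
end

section
/- Let F be a field of characteristic 2, 𝒢 the group ⟨y_1, y_2, ... | y_i² = 1, ((y_i,y_j), y_k) = 1⟩, and F𝒢 its group algebra. Let d_{ij} = (y_i, y_j) + 1 ∈ F𝒢 and let I be the two-sided ideal of F𝒢 generated by all elements d_{i_1 i_2} d_{i_3 i_4} + d_{i_1 i_3} d_{i_2 i_4}. Then for all u_1, u_2, u_3 ∈ F𝒢, the triple commutator [u_1, u_2, u_3] lies in I; i.e., the quotient F𝒢/I satisfies the identity [x_1, x_2, x_3] = 0. -/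
open scoped TensorProduct

/-- The group commutator `(a, b) = a⁻¹ b⁻¹ a b`. -/
def gc {G : Type*} [Group G] (a b : G) : G := a⁻¹ * b⁻¹ * a * b

/-- Relations for the group `𝒢 = ⟨y₁, y₂, … ∣ yᵢ² = 1, ((yᵢ, yⱼ), yₖ) = 1⟩`. -/
def grassRels : Set (FreeGroup ℕ) :=
  (Set.range fun i => FreeGroup.of i * FreeGroup.of i) ∪
  {x | ∃ i j k : ℕ, x = gc (gc (FreeGroup.of i) (FreeGroup.of j)) (FreeGroup.of k)}

/-- The group `𝒢 = ⟨y₁, y₂, … ∣ yᵢ² = 1, ((yᵢ, yⱼ), yₖ) = 1⟩`. -/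
abbrev GroupG := PresentedGroup grassRels

/-- The generators `yᵢ` of `𝒢`. -/
def yG (i : ℕ) : GroupG := PresentedGroup.of i

section GC
variable {G : Type*} [Group G] (a b c : G)

lemma gc_eq_one_iff : gc a b = 1 ↔ a * b = b * a := by
  rw [gc]
  constructor
  · intro h
    have : b * a * (a⁻¹ * b⁻¹ * a * b) = b * a * 1 := by rw [h]
    simpa [mul_assoc] using this
  · intro h
    have : a⁻¹ * b⁻¹ * a * b = a⁻¹ * b⁻¹ * (a * b) := by group
    rw [this, h]; group

lemma gc_mul_left : gc (a*b) c = (b⁻¹ * (gc a c) * b) * gc b c := by unfold gc; group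

lemma gc_mul_right : gc a (b*c) = gc a c * (c⁻¹ * gc a b * c) := by unfold gc; group

lemma gc_inv_left : gc a⁻¹ b = a * (gc a b)⁻¹ * a⁻¹ := by unfold gc; group

@[simp] lemma gc_one_left : gc 1 b = 1 := by unfold gc; group

@[simp] lemma gc_one_right : gc a 1 = 1 := by unfold gc; group

@[simp] lemma gc_self : gc a a = 1 := by unfold gc; group

lemma gc_swap : gc b a = (gc a b)⁻¹ := by unfold gc; group

lemma conj_of_center {z : G} (hz : z ∈ Subgroup.center G) (g : G) : g⁻¹ * z * g = z := by
  have h := Subgroup.mem_center_iff.mp hz g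
  rw [mul_assoc, ← h]; group

end GC

section GroupLemmas

lemma mk_rel {r : FreeGroup ℕ} (h : r ∈ grassRels) : PresentedGroup.mk grassRels r = 1 :=
  (QuotientGroup.eq_one_iff _).mpr (Subgroup.subset_normalClosure h)

lemma mk_gc (a b : FreeGroup ℕ) :
    PresentedGroup.mk grassRels (gc a b) = gc (PresentedGroup.mk grassRels a)
      (PresentedGroup.mk grassRels b) := by
  simp [gc, map_mul, map_inv]

@[simp] lemma yG_sq (i : ℕ) : yG i * yG i = 1 := by
  have : PresentedGroup.mk grassRels (FreeGroup.of i * FreeGroup.of i) = 1 :=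
    mk_rel (Or.inl ⟨i, rfl⟩)
  simpa [yG, PresentedGroup.of, map_mul] using this

@[simp] lemma yG_inv (i : ℕ) : (yG i)⁻¹ = yG i :=
  inv_eq_of_mul_eq_one_right (yG_sq i)

lemma grel (i j k : ℕ) : gc (gc (yG i) (yG j)) (yG k) = 1 := by
  have : PresentedGroup.mk grassRels
      (gc (gc (FreeGroup.of i) (FreeGroup.of j)) (FreeGroup.of k)) = 1 :=
    mk_rel (Or.inr ⟨i, j, k, rfl⟩)
  simp only [mk_gc] at this; exact this

/-- product of a list of generators -/
def W (L : List ℕ) : GroupG := (L.map yG).prod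

@[simp] lemma W_nil : W [] = 1 := rfl

@[simp] lemma W_cons (i : ℕ) (L : List ℕ) : W (i :: L) = yG i * W L := by
  simp [W]

lemma exists_W (g : GroupG) : ∃ L : List ℕ, W L = g := by
  induction g using PresentedGroup.induction_on with
  | H z =>
    induction z using FreeGroup.induction_on with
    | C1 => exact ⟨[], by simp [map_one]⟩
    | of i => exact ⟨[i], by simp [W]; rfl⟩
    | inv_of i _ =>
        refine ⟨[i], ?_⟩
        rw [map_inv]
        show W [i] = (PresentedGroup.mk grassRels (FreeGroup.of i))⁻¹
        have : (PresentedGroup.mk grassRels (FreeGroup.of i)) = yG i := rfl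
        rw [this, yG_inv]; simp [W]
    | mul a b ha hb =>
        obtain ⟨L1, h1⟩ := ha
        obtain ⟨L2, h2⟩ := hb
        exact ⟨L1 ++ L2, by simp [W, map_mul, ← h1, ← h2]⟩

lemma cij_central (i j : ℕ) : gc (yG i) (yG j) ∈ Subgroup.center GroupG := by
  rw [Subgroup.mem_center_iff]
  intro g
  obtain ⟨L, rfl⟩ := exists_W g
  induction L with
  | nil => simp
  | cons k L ih =>
      have h : gc (gc (yG i) (yG j)) (yG k) = 1 := grel i j k
      rw [gc_eq_one_iff] at h
      rw [W_cons, mul_assoc, ih, ← mul_assoc, ← h, mul_assoc]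

lemma gc_yi_central (i : ℕ) (h : GroupG) : gc (yG i) h ∈ Subgroup.center GroupG := by
  obtain ⟨M, rfl⟩ := exists_W h
  induction M with
  | nil => simp
  | cons j M ih =>
      rw [W_cons, gc_mul_right, conj_of_center (cij_central i j)]
      exact Subgroup.mul_mem _ ih (cij_central i j)

lemma gc_central (g h : GroupG) : gc g h ∈ Subgroup.center GroupG := by
  obtain ⟨L, rfl⟩ := exists_W g
  induction L with
  | nil => simp
  | cons i L ih =>
      rw [W_cons, gc_mul_left, conj_of_center (gc_yi_central i _)]
      exact Subgroup.mul_mem _ (gc_yi_central i _) ih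

lemma gc_mul_left' (a b c : GroupG) : gc (a*b) c = gc a c * gc b c := by
  rw [gc_mul_left, conj_of_center (gc_central a c)]

lemma gc_mul_right' (a b c : GroupG) : gc a (b*c) = gc a c * gc a b := by
  rw [gc_mul_right, conj_of_center (gc_central a b)]

lemma gc_sq (g h : GroupG) : gc g h * gc g h = 1 := by
  obtain ⟨L, rfl⟩ := exists_W g
  induction L with
  | nil => simp
  | cons i L ih =>
      rw [W_cons, gc_mul_left']
      have hyi : gc (yG i) h * gc (yG i) h = 1 := by
        rw [← gc_mul_left', yG_sq, gc_one_left]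
      have hcomm := Subgroup.mem_center_iff.mp (gc_central (W L) h) (gc (yG i) h)
      calc gc (yG i) h * gc (W L) h * (gc (yG i) h * gc (W L) h)
          = gc (yG i) h * (gc (W L) h * gc (yG i) h) * gc (W L) h := by group
        _ = gc (yG i) h * (gc (yG i) h * gc (W L) h) * gc (W L) h := by rw [hcomm]
        _ = (gc (yG i) h * gc (yG i) h) * (gc (W L) h * gc (W L) h) := by group
        _ = 1 := by rw [hyi, ih, one_mul]

lemma gc_comm (g h : GroupG) : gc h g = gc g h := by
  rw [gc_swap, inv_eq_of_mul_eq_one_right (gc_sq g h)]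

lemma gc_inv_left' (a b : GroupG) : gc a⁻¹ b = gc a b := by
  rw [gc_inv_left]
  have := conj_of_center (Subgroup.inv_mem _ (gc_central a b)) a⁻¹
  simp only [inv_inv] at this
  rw [this, inv_eq_of_mul_eq_one_right (gc_sq a b)]

end GroupLemmas

/-- `d_{ij} = (yᵢ, yⱼ) + 1` in the group algebra `F𝒢`. -/
noncomputable def dElt (F : Type*) [Field F] (i j : ℕ) : MonoidAlgebra F GroupG :=
  MonoidAlgebra.of F GroupG (gc (yG i) (yG j)) + 1

/-- The two-sided ideal `I` of `F𝒢` generated by all `d_{i₁i₂}d_{i₃i₄} + d_{i₁i₃}d_{i₂i₄}`. -/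
noncomputable def Iideal (F : Type*) [Field F] : TwoSidedIdeal (MonoidAlgebra F GroupG) :=
  TwoSidedIdeal.span
    {x | ∃ i₁ i₂ i₃ i₄ : ℕ, x = dElt F i₁ i₂ * dElt F i₃ i₄ + dElt F i₁ i₃ * dElt F i₂ i₄}

section Algebra
set_option linter.unusedSectionVars false
variable (F : Type*) [Field F] [CharP F 2]

lemma two_zero : (2 : MonoidAlgebra F GroupG) = 0 := by
  have h2 : (2:F) = 0 := by exact_mod_cast CharP.cast_eq_zero F 2
  have : (2 : MonoidAlgebra F GroupG) = algebraMap F _ (2 : F) :=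
    (map_ofNat (algebraMap F (MonoidAlgebra F GroupG)) 2).symm
  rw [this, h2, map_zero]

lemma add_self (x : MonoidAlgebra F GroupG) : x + x = 0 := by
  rw [← two_mul, two_zero, zero_mul]

lemma central_comm {z : GroupG} (hz : z ∈ Subgroup.center GroupG)
    (u : MonoidAlgebra F GroupG) :
    MonoidAlgebra.of F GroupG z * u = u * MonoidAlgebra.of F GroupG z := by
  induction u using MonoidAlgebra.induction_on with
  | of g => rw [← map_mul, ← map_mul, (Subgroup.mem_center_iff.mp hz g)]
  | add f g hf hg => rw [mul_add, add_mul, hf, hg]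
  | smul r f hf => rw [mul_smul_comm, smul_mul_assoc, hf]

/-- `D g h = (g,h) + 1` as an element of the center of `F𝒢`. -/
noncomputable def DD (g h : GroupG) : Subring.center (MonoidAlgebra F GroupG) :=
  ⟨MonoidAlgebra.of F GroupG (gc g h) + 1, by
    rw [Subring.mem_center_iff]
    intro u
    rw [mul_add, add_mul, mul_one, one_mul, central_comm F (gc_central g h) u]⟩

lemma DD_coe (g h : GroupG) :
    (DD F g h : MonoidAlgebra F GroupG) = MonoidAlgebra.of F GroupG (gc g h) + 1 := rfl

lemma DD_comm (g h : GroupG) : DD F g h = DD F h g := by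
  apply Subtype.ext; rw [DD_coe, DD_coe, gc_comm]

@[simp] lemma DD_self (g : GroupG) : DD F g g = 0 := by
  apply Subtype.ext
  rw [DD_coe, gc_self, map_one]
  show (1 : MonoidAlgebra F GroupG) + 1 = 0
  rw [add_self]

@[simp] lemma DD_one_left (h : GroupG) : DD F 1 h = 0 := by
  apply Subtype.ext
  rw [DD_coe, gc_one_left, map_one]
  show (1 : MonoidAlgebra F GroupG) + 1 = 0
  rw [add_self]

@[simp] lemma DD_one_right (g : GroupG) : DD F g 1 = 0 := by
  rw [DD_comm, DD_one_left]

lemma expand_key (u v : MonoidAlgebra F GroupG) :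
    u * v + 1 = (u+1) + (v+1) + (u+1)*(v+1) := by
  have e : (u+1) + (v+1) + (u+1)*(v+1) = u*v + 1 + (u + u) + (v + v) + (1+1+1-1) := by
    noncomm_ring
  rw [e, add_self, add_self, add_self]
  simp

lemma DD_mul_left (g₁ g₂ h : GroupG) :
    DD F (g₁ * g₂) h = DD F g₁ h + DD F g₂ h + DD F g₁ h * DD F g₂ h := by
  apply Subtype.ext
  push_cast [DD_coe]
  rw [gc_mul_left', map_mul, expand_key]

lemma DD_mul_right (g h₁ h₂ : GroupG) :
    DD F g (h₁ * h₂) = DD F g h₁ + DD F g h₂ + DD F g h₁ * DD F g h₂ := by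
  rw [DD_comm, DD_mul_left, DD_comm F h₁ g, DD_comm F h₂ g]

/-- membership of the coercion in the ideal `I`. -/
def MI (x : Subring.center (MonoidAlgebra F GroupG)) : Prop := (x : MonoidAlgebra F GroupG) ∈ Iideal F

lemma MI_zero : MI F 0 := by
  show ((0:Subring.center (MonoidAlgebra F GroupG)) : MonoidAlgebra F GroupG) ∈ Iideal F
  rw [ZeroMemClass.coe_zero]; exact TwoSidedIdeal.zero_mem _

lemma MI_add {x y} (hx : MI F x) (hy : MI F y) : MI F (x + y) := by
  show ((x+y : Subring.center (MonoidAlgebra F GroupG)) : MonoidAlgebra F GroupG) ∈ Iideal F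
  push_cast
  exact TwoSidedIdeal.add_mem _ hx hy

lemma MI_mul_left (z : Subring.center (MonoidAlgebra F GroupG)) {x} (hx : MI F x) :
    MI F (z * x) := by
  show ((z*x : Subring.center (MonoidAlgebra F GroupG)) : MonoidAlgebra F GroupG) ∈ Iideal F
  push_cast
  exact TwoSidedIdeal.mul_mem_left _ _ _ hx

lemma MI_mul_right (z : Subring.center (MonoidAlgebra F GroupG)) {x} (hx : MI F x) :
    MI F (x * z) := by
  rw [mul_comm]; exact MI_mul_left F z hx

lemma MI_of_eq {x y} (h : x = y) (hy : MI F y) : MI F x := h ▸ hy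

lemma gen_mem (i₁ i₂ i₃ i₄ : ℕ) :
    MI F (DD F (yG i₁) (yG i₂) * DD F (yG i₃) (yG i₄) +
          DD F (yG i₁) (yG i₃) * DD F (yG i₂) (yG i₄)) := by
  show _ ∈ Iideal F
  apply TwoSidedIdeal.subset_span
  refine ⟨i₁, i₂, i₃, i₄, ?_⟩
  push_cast
  rfl

end Algebra
section Ladder
set_option linter.unusedSectionVars false
variable (F : Type*) [Field F] [CharP F 2]

@[simp] lemma W_single (i : ℕ) : W [i] = yG i := by simp [W]

lemma L0 (a b c : ℕ) : MI F (DD F (yG a) (yG b) * DD F (yG a) (yG c)) := by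
  have h := gen_mem F b a c a
  rw [DD_self, mul_zero, add_zero] at h
  refine MI_of_eq F ?_ h
  rw [DD_comm F (yG a) (yG b), DD_comm F (yG a) (yG c)]

lemma Bgen (a c n p : ℕ) :
    MI F (DD F (yG a) (yG n) * DD F (yG c) (yG p) +
          DD F (yG c) (yG n) * DD F (yG a) (yG p)) := by
  have h := gen_mem F a n p c
  refine MI_of_eq F ?_ h
  rw [DD_comm F (yG p) (yG c), DD_comm F (yG n) (yG c)]
  ring

lemma P1 (i j : ℕ) (M : List ℕ) :
    MI F (DD F (yG i) (yG j) * DD F (yG i) (W M)) := by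
  induction M with
  | nil => rw [W_nil, DD_one_right, mul_zero]; exact MI_zero F
  | cons k M ih =>
      rw [W_cons, DD_mul_right]
      have e : DD F (yG i) (yG j) *
          (DD F (yG i) (yG k) + DD F (yG i) (W M) + DD F (yG i) (yG k) * DD F (yG i) (W M)) =
          DD F (yG i) (yG j) * DD F (yG i) (yG k) +
          (DD F (yG i) (yG j) * DD F (yG i) (W M) +
           (DD F (yG i) (yG j) * DD F (yG i) (yG k)) * DD F (yG i) (W M)) := by ring
      exact MI_of_eq F e (MI_add F (L0 F i j k)
        (MI_add F ih (MI_mul_right F _ (L0 F i j k))))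

lemma P2 (a c n : ℕ) (P : List ℕ) :
    MI F (DD F (yG a) (yG n) * DD F (yG c) (W P) +
          DD F (yG c) (yG n) * DD F (yG a) (W P)) := by
  induction P with
  | nil => rw [W_nil, DD_one_right, DD_one_right, mul_zero, mul_zero, add_zero]; exact MI_zero F
  | cons p P ih =>
      rw [W_cons, DD_mul_right F (yG c), DD_mul_right F (yG a)]
      have e : DD F (yG a) (yG n) *
            (DD F (yG c) (yG p) + DD F (yG c) (W P) + DD F (yG c) (yG p) * DD F (yG c) (W P)) +
          DD F (yG c) (yG n) *
            (DD F (yG a) (yG p) + DD F (yG a) (W P) + DD F (yG a) (yG p) * DD F (yG a) (W P)) =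
          (DD F (yG a) (yG n) * DD F (yG c) (yG p) + DD F (yG c) (yG n) * DD F (yG a) (yG p)) +
          ((DD F (yG a) (yG n) * DD F (yG c) (W P) + DD F (yG c) (yG n) * DD F (yG a) (W P)) +
           ((DD F (yG c) (yG p) * DD F (yG c) (W P)) * DD F (yG a) (yG n) +
            (DD F (yG a) (yG p) * DD F (yG a) (W P)) * DD F (yG c) (yG n))) := by ring
      exact MI_of_eq F e (MI_add F (Bgen F a c n p)
        (MI_add F ih (MI_add F (MI_mul_right F _ (P1 F c p P)) (MI_mul_right F _ (P1 F a p P)))))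

lemma P3 (a c : ℕ) (N P : List ℕ) :
    MI F (DD F (yG a) (W N) * DD F (yG c) (W P) +
          DD F (yG c) (W N) * DD F (yG a) (W P)) := by
  induction N with
  | nil => rw [W_nil, DD_one_right, DD_one_right, zero_mul, zero_mul, add_zero]; exact MI_zero F
  | cons n N ih =>
      rw [W_cons, DD_mul_right F (yG a), DD_mul_right F (yG c)]
      have e : (DD F (yG a) (yG n) + DD F (yG a) (W N) + DD F (yG a) (yG n) * DD F (yG a) (W N)) *
            DD F (yG c) (W P) +
          (DD F (yG c) (yG n) + DD F (yG c) (W N) + DD F (yG c) (yG n) * DD F (yG c) (W N)) *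
            DD F (yG a) (W P) =
          (DD F (yG a) (yG n) * DD F (yG c) (W P) + DD F (yG c) (yG n) * DD F (yG a) (W P)) +
          ((DD F (yG a) (W N) * DD F (yG c) (W P) + DD F (yG c) (W N) * DD F (yG a) (W P)) +
           ((DD F (yG a) (yG n) * DD F (yG a) (W N)) * DD F (yG c) (W P) +
            (DD F (yG c) (yG n) * DD F (yG c) (W N)) * DD F (yG a) (W P))) := by ring
      exact MI_of_eq F e (MI_add F (P2 F a c n P)
        (MI_add F ih (MI_add F (MI_mul_right F _ (P1 F a n N)) (MI_mul_right F _ (P1 F c n N)))))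

lemma P4 (a : ℕ) (M N : List ℕ) :
    MI F (DD F (yG a) (W N) * DD F (yG a) (W M)) := by
  induction N with
  | nil => rw [W_nil, DD_one_right, zero_mul]; exact MI_zero F
  | cons n N ih =>
      rw [W_cons, DD_mul_right F (yG a)]
      have e : (DD F (yG a) (yG n) + DD F (yG a) (W N) + DD F (yG a) (yG n) * DD F (yG a) (W N)) *
            DD F (yG a) (W M) =
          DD F (yG a) (yG n) * DD F (yG a) (W M) +
          (DD F (yG a) (W N) * DD F (yG a) (W M) +
           (DD F (yG a) (yG n) * DD F (yG a) (W M)) * DD F (yG a) (W N)) := by ring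
      exact MI_of_eq F e (MI_add F (P1 F a n M)
        (MI_add F ih (MI_mul_right F _ (P1 F a n M))))

lemma A1 (L : List ℕ) (j k : ℕ) :
    MI F (DD F (W L) (yG j) * DD F (W L) (yG k)) := by
  induction L with
  | nil => rw [W_nil, DD_one_left, zero_mul]; exact MI_zero F
  | cons i L ih =>
      rw [W_cons, DD_mul_left F _ _ (yG j), DD_mul_left F _ _ (yG k)]
      have e : (DD F (yG i) (yG j) + DD F (W L) (yG j) + DD F (yG i) (yG j) * DD F (W L) (yG j)) *
          (DD F (yG i) (yG k) + DD F (W L) (yG k) + DD F (yG i) (yG k) * DD F (W L) (yG k)) =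
          DD F (yG i) (yG j) * DD F (yG i) (yG k) +
          ((DD F (yG i) (yG j) * DD F (W L) (yG k) + DD F (W L) (yG j) * DD F (yG i) (yG k)) +
           (DD F (W L) (yG j) * DD F (W L) (yG k) +
            ((DD F (yG i) (yG j) * DD F (W L) (yG j)) *
              (DD F (yG i) (yG k) + DD F (W L) (yG k) + DD F (yG i) (yG k) * DD F (W L) (yG k)) +
             (DD F (yG i) (yG k) * DD F (W L) (yG k)) *
              (DD F (yG i) (yG j) + DD F (W L) (yG j))))) := by ring
      refine MI_of_eq F e (MI_add F (L0 F i j k) (MI_add F ?cross (MI_add F ih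
        (MI_add F (MI_mul_right F _ ?sj) (MI_mul_right F _ ?sk)))))
      case cross =>
        have h := P3 F j k [i] L
        refine MI_of_eq F ?_ h
        rw [W_single, DD_comm F (yG j) (yG i), DD_comm F (yG k) (W L),
          DD_comm F (yG j) (W L), DD_comm F (yG k) (yG i)]
        ring
      case sj =>
        have h := P4 F j L [i]
        refine MI_of_eq F ?_ h
        rw [W_single, DD_comm F (yG j) (yG i), DD_comm F (yG j) (W L)]
      case sk =>
        have h := P4 F k L [i]
        refine MI_of_eq F ?_ h
        rw [W_single, DD_comm F (yG k) (yG i), DD_comm F (yG k) (W L)]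

lemma A2 (L M : List ℕ) (j : ℕ) :
    MI F (DD F (W L) (yG j) * DD F (W L) (W M)) := by
  induction M with
  | nil => rw [W_nil, DD_one_right, mul_zero]; exact MI_zero F
  | cons k M ih =>
      rw [W_cons, DD_mul_right]
      have e : DD F (W L) (yG j) *
          (DD F (W L) (yG k) + DD F (W L) (W M) + DD F (W L) (yG k) * DD F (W L) (W M)) =
          DD F (W L) (yG j) * DD F (W L) (yG k) +
          (DD F (W L) (yG j) * DD F (W L) (W M) +
           (DD F (W L) (yG j) * DD F (W L) (yG k)) * DD F (W L) (W M)) := by ring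
      exact MI_of_eq F e (MI_add F (A1 F L j k)
        (MI_add F ih (MI_mul_right F _ (A1 F L j k))))

lemma A3 (L M N : List ℕ) :
    MI F (DD F (W L) (W N) * DD F (W L) (W M)) := by
  induction N with
  | nil => rw [W_nil, DD_one_right, zero_mul]; exact MI_zero F
  | cons j N ih =>
      rw [W_cons, DD_mul_right]
      have e : (DD F (W L) (yG j) + DD F (W L) (W N) + DD F (W L) (yG j) * DD F (W L) (W N)) *
            DD F (W L) (W M) =
          DD F (W L) (yG j) * DD F (W L) (W M) +
          (DD F (W L) (W N) * DD F (W L) (W M) +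
           (DD F (W L) (yG j) * DD F (W L) (W N)) * DD F (W L) (W M)) := by ring
      exact MI_of_eq F e (MI_add F (A2 F L M j)
        (MI_add F ih (MI_mul_right F _ (A2 F L N j))))

lemma P5 (a : ℕ) (M N P : List ℕ) :
    MI F (DD F (yG a) (W N) * DD F (W M) (W P) +
          DD F (W M) (W N) * DD F (yG a) (W P)) := by
  induction M with
  | nil => rw [W_nil, DD_one_left, DD_one_left, mul_zero, zero_mul, add_zero]; exact MI_zero F
  | cons c M ih =>
      rw [W_cons, DD_mul_left F _ _ (W P), DD_mul_left F _ _ (W N)]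
      have e : DD F (yG a) (W N) *
            (DD F (yG c) (W P) + DD F (W M) (W P) + DD F (yG c) (W P) * DD F (W M) (W P)) +
          (DD F (yG c) (W N) + DD F (W M) (W N) + DD F (yG c) (W N) * DD F (W M) (W N)) *
            DD F (yG a) (W P) =
          (DD F (yG a) (W N) * DD F (yG c) (W P) + DD F (yG c) (W N) * DD F (yG a) (W P)) +
          ((DD F (yG a) (W N) * DD F (W M) (W P) + DD F (W M) (W N) * DD F (yG a) (W P)) +
           ((DD F (yG c) (W P) * DD F (W M) (W P)) * DD F (yG a) (W N) +
            (DD F (yG c) (W N) * DD F (W M) (W N)) * DD F (yG a) (W P))) := by ring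
      refine MI_of_eq F e (MI_add F (P3 F a c N P) (MI_add F ih
        (MI_add F (MI_mul_right F _ ?sp) (MI_mul_right F _ ?sn))))
      case sp =>
        have h := A2 F P M c
        refine MI_of_eq F ?_ h
        rw [DD_comm F (yG c) (W P), DD_comm F (W M) (W P)]
      case sn =>
        have h := A2 F N M c
        refine MI_of_eq F ?_ h
        rw [DD_comm F (yG c) (W N), DD_comm F (W M) (W N)]

lemma P6 (L M N P : List ℕ) :
    MI F (DD F (W L) (W N) * DD F (W M) (W P) +
          DD F (W M) (W N) * DD F (W L) (W P)) := by
  induction L with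
  | nil => rw [W_nil, DD_one_left, DD_one_left, zero_mul, mul_zero, add_zero]; exact MI_zero F
  | cons a L ih =>
      rw [W_cons, DD_mul_left F _ _ (W N), DD_mul_left F _ _ (W P)]
      have e : (DD F (yG a) (W N) + DD F (W L) (W N) + DD F (yG a) (W N) * DD F (W L) (W N)) *
            DD F (W M) (W P) +
          DD F (W M) (W N) *
            (DD F (yG a) (W P) + DD F (W L) (W P) + DD F (yG a) (W P) * DD F (W L) (W P)) =
          (DD F (yG a) (W N) * DD F (W M) (W P) + DD F (W M) (W N) * DD F (yG a) (W P)) +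
          ((DD F (W L) (W N) * DD F (W M) (W P) + DD F (W M) (W N) * DD F (W L) (W P)) +
           ((DD F (yG a) (W N) * DD F (W L) (W N)) * DD F (W M) (W P) +
            (DD F (yG a) (W P) * DD F (W L) (W P)) * DD F (W M) (W N))) := by ring
      refine MI_of_eq F e (MI_add F (P5 F a M N P) (MI_add F ih
        (MI_add F (MI_mul_right F _ ?sn) (MI_mul_right F _ ?sp))))
      case sn =>
        have h := A3 F N L [a]
        refine MI_of_eq F ?_ h
        rw [W_single, DD_comm F (yG a) (W N), DD_comm F (W L) (W N)]
      case sp =>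
        have h := A3 F P L [a]
        refine MI_of_eq F ?_ h
        rw [W_single, DD_comm F (yG a) (W P), DD_comm F (W L) (W P)]

/-- The key fact: `d(hg,k) d(g,h) ∈ I` for all `g,h,k`. -/
lemma key_s14 (g h k : GroupG) : MI F (DD F (h * g) k * DD F g h) := by
  obtain ⟨L, rfl⟩ := exists_W g
  obtain ⟨M, rfl⟩ := exists_W h
  obtain ⟨N, rfl⟩ := exists_W k
  rw [DD_mul_left]
  have e : (DD F (W M) (W N) + DD F (W L) (W N) + DD F (W M) (W N) * DD F (W L) (W N)) *
        DD F (W L) (W M) =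
      DD F (W M) (W N) * DD F (W L) (W M) +
      (DD F (W L) (W N) * DD F (W L) (W M) +
       (DD F (W M) (W N) * DD F (W L) (W N)) * DD F (W L) (W M)) := by ring
  refine MI_of_eq F e (MI_add F ?t1 (MI_add F (A3 F L M N) (MI_mul_right F _ ?t3)))
  case t1 =>
    have h := A3 F M L N
    refine MI_of_eq F ?_ h
    rw [DD_comm F (W L) (W M)]
  case t3 =>
    have h := A3 F N L M
    refine MI_of_eq F ?_ h
    rw [DD_comm F (W M) (W N), DD_comm F (W L) (W N)]
end Ladder

section Main
set_option linter.unusedSectionVars false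
variable (F : Type*) [Field F] [CharP F 2]

lemma neg_eq' (x : MonoidAlgebra F GroupG) : -x = x :=
  neg_eq_of_add_eq_zero_left (add_self F x)

lemma sub_eq_add' (x y : MonoidAlgebra F GroupG) : x - y = x + y := by
  rw [sub_eq_add_neg, neg_eq']

lemma hg_gc (g h : GroupG) : h * g * gc g h = g * h := by unfold gc; group

lemma bracket_of (g h : GroupG) :
    ⁅MonoidAlgebra.of F GroupG g, MonoidAlgebra.of F GroupG h⁆ =
    MonoidAlgebra.of F GroupG (h*g) * (DD F g h : MonoidAlgebra F GroupG) := by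
  rw [Ring.lie_def, sub_eq_add', DD_coe, mul_add, mul_one, ← map_mul, ← map_mul, ← map_mul,
    hg_gc, add_comm]

lemma bracket_central (x y : MonoidAlgebra F GroupG)
    (z : Subring.center (MonoidAlgebra F GroupG)) :
    ⁅x * (z : MonoidAlgebra F GroupG), y⁆ = ⁅x, y⁆ * z := by
  have hzy := Subring.mem_center_iff.mp z.2 y
  rw [Ring.lie_def, Ring.lie_def, sub_mul, mul_assoc x _ y, ← hzy, ← mul_assoc, ← mul_assoc]

lemma triple_of (g h k : GroupG) :
    ⁅⁅MonoidAlgebra.of F GroupG g, MonoidAlgebra.of F GroupG h⁆,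
      MonoidAlgebra.of F GroupG k⁆ ∈ Iideal F := by
  rw [bracket_of, bracket_central, bracket_of]
  have hm := key_s14 F g h k
  have e : MonoidAlgebra.of F GroupG (k*(h*g)) * (DD F (h*g) k : MonoidAlgebra F GroupG) *
        (DD F g h : MonoidAlgebra F GroupG)
      = MonoidAlgebra.of F GroupG (k*(h*g)) *
        ((DD F (h*g) k * DD F g h : Subring.center (MonoidAlgebra F GroupG)) :
          MonoidAlgebra F GroupG) := by
    push_cast; rw [mul_assoc]
  rw [e]
  exact TwoSidedIdeal.mul_mem_left _ _ _ hm

end Main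

/-- Every triple ring commutator in `F𝒢` (char `F` = 2) lies in `I`. -/
theorem statement_14 (F : Type*) [Field F] [CharP F 2]
    (u₁ u₂ u₃ : MonoidAlgebra F GroupG) :
    ⁅⁅u₁, u₂⁆, u₃⁆ ∈ Iideal F := by
  letI : LieRing (MonoidAlgebra F GroupG) := LieRing.ofAssociativeRing
  induction u₁ using MonoidAlgebra.induction_on with
  | add f g hf hg => rw [add_lie, add_lie]; exact TwoSidedIdeal.add_mem _ hf hg
  | smul r f hf =>
      rw [smul_lie, smul_lie, Algebra.smul_def]
      exact TwoSidedIdeal.mul_mem_left _ _ _ hf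
  | of g =>
    induction u₂ using MonoidAlgebra.induction_on with
    | add f g' hf hg => rw [lie_add, add_lie]; exact TwoSidedIdeal.add_mem _ hf hg
    | smul r f hf =>
        have e : ⁅(MonoidAlgebra.of F GroupG) g, r • f⁆ = r • ⁅(MonoidAlgebra.of F GroupG) g, f⁆ := by
          rw [Ring.lie_def, Ring.lie_def, mul_smul_comm, smul_mul_assoc, ← smul_sub]
        rw [e, smul_lie, Algebra.smul_def]
        exact TwoSidedIdeal.mul_mem_left _ _ _ hf
    | of h =>
      induction u₃ using MonoidAlgebra.induction_on with
      | add f g' hf hg => rw [lie_add]; exact TwoSidedIdeal.add_mem _ hf hg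
      | smul r f hf =>
          have e : ⁅⁅(MonoidAlgebra.of F GroupG) g, (MonoidAlgebra.of F GroupG) h⁆, r • f⁆ =
              r • ⁅⁅(MonoidAlgebra.of F GroupG) g, (MonoidAlgebra.of F GroupG) h⁆, f⁆ := by
            rw [Ring.lie_def, Ring.lie_def, Ring.lie_def, mul_smul_comm, smul_mul_assoc, ← smul_sub]
          rw [e, Algebra.smul_def]
          exact TwoSidedIdeal.mul_mem_left _ _ _ hf
      | of k => exact triple_of F g h k
end
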